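/- arXiv:1606.06977 — 5 statements merged into one kernel-verified Lean document; each statement's English description precedes it below -/
import Mathlib

section
/- Let p, q ∈ ℕ with p ≤ q + 1, let a_1, …, a_p ∈ ℂ, let b_1, …, b_{q+1} ∈ ℂ with b_{q+1} = 1 and with no b_i a nonpositive integer, and let z ∈ ℂ. For k ∈ ℕ set T(k) = z^k · ∏_{i=1}^p (a_i)_k / ∏_{i=1}^{q+1} (b_i)_k. Let N ∈ ℕ be such that Re(b_i) + N > 0 for every i ∈ {1, …, q+1}, and set D = |z| · ∏_{i=1}^p (1 + |a_i − b_i| / |b_i + N|) · ∏_{i=p+1}^{q+1} 1 / |b_i + N|. If D < 1, then the series ∑_{k=N}^∞ T(k) converges absolutely and |∑_{k=N}^∞ T(k)| ≤ |T(N)| / (1 − D). -/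
open Finset

set_option maxHeartbeats 1000000

private lemma abs_add_nat_mono (b : ℂ) (N k : ℕ) (hN : 0 < b.re + N) (hk : N ≤ k) :
    ‖b + N‖ ≤ ‖b + k‖ := by
  rw [Complex.norm_def, Complex.norm_def, Complex.normSq_apply, Complex.normSq_apply]
  simp only [Complex.add_re, Complex.add_im, Complex.natCast_re, Complex.natCast_im]
  apply Real.sqrt_le_sqrt
  have hk' : (N : ℝ) ≤ k := Nat.cast_le.mpr hk
  nlinarith

/-- Tail bound for the convergent generalized hypergeometric series
(Theorem 4.1 of the paper). Parameters are 0-indexed: `a 0, …, a (p-1)`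
are the upper parameters and `b 0, …, b q` the lower parameters with
`b q = 1` playing the role of the factorial. -/
theorem pFq_tail_bound (p q : ℕ) (hpq : p ≤ q + 1) (a b : ℕ → ℂ)
    (hblast : b q = 1)
    (hbint : ∀ i ≤ q, ∀ m : ℕ, b i ≠ -(m : ℂ))
    (z : ℂ) (N : ℕ)
    (T : ℕ → ℂ)
    (hT : ∀ k, T k =
      z ^ k * (∏ i ∈ range p, ∏ j ∈ range k, (a i + (j : ℂ)))
        / (∏ i ∈ range (q + 1), ∏ j ∈ range k, (b i + (j : ℂ))))
    (hN : ∀ i ≤ q, 0 < (b i).re + N)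
    (D : ℝ)
    (hD : D = ‖z‖
        * (∏ i ∈ range p,
            (1 + ‖a i - b i‖ / ‖b i + (N : ℂ)‖))
        * (∏ i ∈ Finset.Ico p (q + 1), 1 / ‖b i + (N : ℂ)‖))
    (hD1 : D < 1) :
    Summable (fun k : ℕ => ‖T (N + k)‖) ∧
      ‖∑' k : ℕ, T (N + k)‖ ≤ ‖T N‖ / (1 - D) := by
  have habsN : ∀ i ≤ q, (0 : ℝ) < ‖b i + N‖ := by
    intro i hi
    have hre := hN i hi
    have hne : b i + (N : ℂ) ≠ 0 := by
      intro h
      have := congrArg Complex.re h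
      simp only [Complex.add_re, Complex.natCast_re, Complex.zero_re] at this
      linarith
    exact norm_pos_iff.mpr hne
  have habsk : ∀ i ≤ q, ∀ k, N ≤ k → (0 : ℝ) < ‖b i + k‖ := by
    intro i hi k hk
    exact lt_of_lt_of_le (habsN i hi) (abs_add_nat_mono _ _ _ (hN i hi) hk)
  have hD0 : 0 ≤ D := by
    rw [hD]; positivity
  -- the key ratio bound
  have hstep : ∀ k, N ≤ k → ‖T (k + 1)‖ ≤ D * ‖T k‖ := by
    intro k hk
    have key : ‖z‖ * (∏ i ∈ range p, ‖a i + (k : ℂ)‖)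
        / (∏ i ∈ range (q + 1), ‖b i + (k : ℂ)‖) ≤ D := by
      have hsplit : (∏ i ∈ range (q + 1), ‖b i + (k : ℂ)‖)
          = (∏ i ∈ range p, ‖b i + (k : ℂ)‖)
            * ∏ i ∈ Finset.Ico p (q + 1), ‖b i + (k : ℂ)‖ := by
        rw [range_eq_Ico, ← Finset.prod_Ico_consecutive _ (Nat.zero_le p) hpq,
          ← range_eq_Ico]
      have h1 : (∏ i ∈ range p, ‖a i + (k : ℂ)‖)
          / (∏ i ∈ range p, ‖b i + (k : ℂ)‖)
          = ∏ i ∈ range p, ‖a i + (k : ℂ)‖ / ‖b i + (k : ℂ)‖ := by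
        rw [Finset.prod_div_distrib]
      have h2 : (1 : ℝ) / (∏ i ∈ Finset.Ico p (q + 1), ‖b i + (k : ℂ)‖)
          = ∏ i ∈ Finset.Ico p (q + 1), 1 / ‖b i + (k : ℂ)‖ := by
        simp [one_div, ← Finset.prod_inv_distrib]
      have heq : ‖z‖ * (∏ i ∈ range p, ‖a i + (k : ℂ)‖)
          / (∏ i ∈ range (q + 1), ‖b i + (k : ℂ)‖)
          = ‖z‖
            * (∏ i ∈ range p, ‖a i + (k : ℂ)‖ / ‖b i + (k : ℂ)‖)
            * (∏ i ∈ Finset.Ico p (q + 1), 1 / ‖b i + (k : ℂ)‖) := by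
        rw [hsplit, ← h1, ← h2]; ring
      rw [heq, hD]
      have hP : (∏ i ∈ range p, ‖a i + (k : ℂ)‖ / ‖b i + (k : ℂ)‖)
          ≤ ∏ i ∈ range p, (1 + ‖a i - b i‖ / ‖b i + (N : ℂ)‖) := by
        apply Finset.prod_le_prod
        · intro i _
          exact div_nonneg (norm_nonneg _) (norm_nonneg _)
        · intro i hi
          have hiq : i ≤ q := by
            have := mem_range.mp hi; omega
          have hbN := habsN i hiq
          have hbk := habsk i hiq k hk
          have hmono := abs_add_nat_mono (b i) N k (hN i hiq) hk
          have htri : ‖a i + (k : ℂ)‖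
              ≤ ‖b i + (k : ℂ)‖ + ‖a i - b i‖ := by
            have h : a i + (k : ℂ) = (b i + k) + (a i - b i) := by ring
            rw [h]; exact norm_add_le _ _
          calc ‖a i + (k : ℂ)‖ / ‖b i + (k : ℂ)‖
              ≤ (‖b i + (k : ℂ)‖ + ‖a i - b i‖)
                / ‖b i + (k : ℂ)‖ := by gcongr
            _ = 1 + ‖a i - b i‖ / ‖b i + (k : ℂ)‖ := by
                rw [add_div, div_self (ne_of_gt hbk)]
            _ ≤ 1 + ‖a i - b i‖ / ‖b i + (N : ℂ)‖ := by gcongr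
      have hQ : (∏ i ∈ Finset.Ico p (q + 1), 1 / ‖b i + (k : ℂ)‖)
          ≤ ∏ i ∈ Finset.Ico p (q + 1), 1 / ‖b i + (N : ℂ)‖ := by
        apply Finset.prod_le_prod
        · intro i hi
          have hiq : i ≤ q := by
            have := (Finset.mem_Ico.mp hi).2; omega
          exact le_of_lt (one_div_pos.mpr (habsk i hiq k hk))
        · intro i hi
          have hiq : i ≤ q := by
            have := (Finset.mem_Ico.mp hi).2; omega
          have hmono := abs_add_nat_mono (b i) N k (hN i hiq) hk
          exact one_div_le_one_div_of_le (habsN i hiq) hmono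
      have hPnn : (0 : ℝ) ≤ ∏ i ∈ range p,
          ‖a i + (k : ℂ)‖ / ‖b i + (k : ℂ)‖ := by
        apply Finset.prod_nonneg
        intro i _
        exact div_nonneg (norm_nonneg _) (norm_nonneg _)
      have hQnn : (0 : ℝ) ≤ ∏ i ∈ Finset.Ico p (q + 1),
          1 / ‖b i + (k : ℂ)‖ := by
        apply Finset.prod_nonneg
        intro i _
        positivity
      have hz : (0 : ℝ) ≤ ‖z‖ := norm_nonneg _
      have hRnn : (0 : ℝ) ≤ ‖z‖ * ∏ i ∈ range p,
          (1 + ‖a i - b i‖ / ‖b i + (N : ℂ)‖) := by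
        apply mul_nonneg hz
        apply Finset.prod_nonneg
        intro i _
        positivity
      exact mul_le_mul (mul_le_mul_of_nonneg_left hP hz) hQ hQnn hRnn
    have hTk1 : T (k + 1) = T k * (z * (∏ i ∈ range p, (a i + (k : ℂ)))
        / (∏ i ∈ range (q + 1), (b i + (k : ℂ)))) := by
      rw [hT (k + 1), hT k, div_mul_div_comm]
      simp only [prod_range_succ, Finset.prod_mul_distrib, pow_succ]
      ring
    rw [hTk1, norm_mul]
    have key' : ‖z * (∏ i ∈ range p, (a i + (k : ℂ)))
        / (∏ i ∈ range (q + 1), (b i + (k : ℂ)))‖ ≤ D := by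
      rw [norm_div, norm_mul, norm_prod, norm_prod]
      exact key
    calc ‖T k‖ * ‖z * (∏ i ∈ range p, (a i + (k : ℂ)))
          / (∏ i ∈ range (q + 1), (b i + (k : ℂ)))‖
        ≤ ‖T k‖ * D :=
          mul_le_mul_of_nonneg_left key' (norm_nonneg _)
      _ = D * ‖T k‖ := mul_comm _ _
  -- geometric domination
  have hpow : ∀ k, ‖T (N + k)‖ ≤ ‖T N‖ * D ^ k := by
    intro k
    induction k with
    | zero => simp
    | succ k ih =>
        have h1 : N + (k + 1) = (N + k) + 1 := by omega
        rw [h1]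
        calc ‖T ((N + k) + 1)‖ ≤ D * ‖T (N + k)‖ :=
              hstep (N + k) (Nat.le_add_right _ _)
          _ ≤ D * (‖T N‖ * D ^ k) := by
              exact mul_le_mul_of_nonneg_left ih hD0
          _ = ‖T N‖ * D ^ (k + 1) := by ring
  have hgeo : Summable (fun k : ℕ => ‖T N‖ * D ^ k) :=
    (summable_geometric_of_lt_one hD0 hD1).mul_left _
  have hsum : Summable (fun k : ℕ => ‖T (N + k)‖) :=
    Summable.of_nonneg_of_le (fun k => norm_nonneg _) hpow hgeo
  refine ⟨hsum, ?_⟩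
  have hsum' : Summable (fun k : ℕ => ‖T (N + k)‖) := by
    simpa using hsum
  calc ‖∑' k : ℕ, T (N + k)‖ = ‖∑' k : ℕ, T (N + k)‖ :=
        rfl
    _ ≤ ∑' k : ℕ, ‖T (N + k)‖ := norm_tsum_le_tsum_norm hsum'
    _ = ∑' k : ℕ, ‖T (N + k)‖ := by
        rfl
    _ ≤ ∑' k : ℕ, ‖T N‖ * D ^ k := Summable.tsum_le_tsum hpow hsum hgeo
    _ = ‖T N‖ * (1 - D)⁻¹ := by
        rw [tsum_mul_left, tsum_geometric_of_lt_one hD0 hD1]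
    _ = ‖T N‖ / (1 - D) := (div_eq_mul_inv _ _).symm
end

section
/- Let A, B ∈ ℂ[[x]] be formal power series with B_{[0]} ≠ 0. Define |A| ∈ ℝ[[x]] as the series whose k-th coefficient is |A_{[k]}|, and define 𝓡(B) ∈ ℝ[[x]] as the series with constant coefficient |B_{[0]}| and k-th coefficient −|B_{[k]}| for k ≥ 1. Then 𝓡(B) is invertible in ℝ[[x]], every coefficient of 𝓡(B)^{-1} is nonnegative, and for every k ∈ ℕ one has |(A · B^{-1})_{[k]}| ≤ (|A| · 𝓡(B)^{-1})_{[k]}. -/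
/-- For `A ∈ ℂ[[x]]`, `|A| ∈ ℝ[[x]]` is the series whose `k`-th coefficient
is `|A_[k]|`. -/
noncomputable def psAbs (A : PowerSeries ℂ) : PowerSeries ℝ :=
  PowerSeries.mk fun k => ‖PowerSeries.coeff k A‖

/-- For `B ∈ ℂ[[x]]`, `𝓡(B) ∈ ℝ[[x]]` has constant coefficient `|B_[0]|`
and `k`-th coefficient `−|B_[k]|` for `k ≥ 1`. -/
noncomputable def psR (B : PowerSeries ℂ) : PowerSeries ℝ :=
  PowerSeries.mk fun k =>
    if k = 0 then ‖PowerSeries.coeff 0 B‖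
    else -‖PowerSeries.coeff k B‖

open PowerSeries Finset in
lemma psR_key (B : PowerSeries ℂ) (hB : PowerSeries.constantCoeff B ≠ 0) (n : ℕ) :
    0 ≤ coeff n (psR B)⁻¹ ∧ ‖coeff n B⁻¹‖ ≤ coeff n (psR B)⁻¹ := by
  have hc : constantCoeff (psR B) = ‖constantCoeff B‖ := by
    simp [psR, ← coeff_zero_eq_constantCoeff]
  have habs : (0:ℝ) < ‖constantCoeff B‖ := by
    simpa using (norm_pos_iff.mpr hB)
  induction n using Nat.strong_induction_on with
  | _ n ih =>
    rcases Nat.eq_zero_or_pos n with rfl | hn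
    · rw [coeff_inv, coeff_inv, if_pos rfl, if_pos rfl, hc,
        ← coeff_zero_eq_constantCoeff, norm_inv]
      exact ⟨by positivity, le_refl _⟩
    · have hn0 : n ≠ 0 := hn.ne'
      rw [coeff_inv, coeff_inv, if_neg hn0, if_neg hn0, hc]
      have hco : ∀ x ∈ antidiagonal n,
          (if x.2 < n then coeff x.1 (psR B) * coeff x.2 (psR B)⁻¹ else 0)
          = -(if x.2 < n then ‖coeff x.1 B‖ * coeff x.2 (psR B)⁻¹ else 0) := by
        intro x hx
        by_cases h : x.2 < n
        · have hx1 : x.1 ≠ 0 := by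
            rintro h1
            rw [Finset.HasAntidiagonal.mem_antidiagonal] at hx
            omega
          simp [h, psR, hx1, neg_mul]
        · simp [h]
      rw [Finset.sum_congr rfl hco, Finset.sum_neg_distrib]
      simp only [neg_mul, mul_neg, neg_neg]
      have hsum_nonneg : 0 ≤ ∑ x ∈ antidiagonal n,
          (if x.2 < n then ‖coeff x.1 B‖ * coeff x.2 (psR B)⁻¹ else 0) := by
        apply Finset.sum_nonneg
        intro x hx
        by_cases h : x.2 < n
        · simp only [if_pos h]
          exact mul_nonneg (norm_nonneg _) (ih x.2 h).1
        · simp [h]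
      refine ⟨mul_nonneg (inv_nonneg.mpr habs.le) hsum_nonneg, ?_⟩
      rw [norm_neg, norm_mul, norm_inv]
      refine mul_le_mul_of_nonneg_left ?_ (inv_nonneg.mpr habs.le)
      calc ‖∑ x ∈ antidiagonal n,
              if x.2 < n then coeff x.1 B * coeff x.2 B⁻¹ else 0‖
            ≤ ∑ x ∈ antidiagonal n,
              ‖if x.2 < n then coeff x.1 B * coeff x.2 B⁻¹ else 0‖ :=
              norm_sum_le _ _
          _ ≤ _ := by
              apply Finset.sum_le_sum
              intro x hx
              by_cases h : x.2 < n
              · simp only [if_pos h, norm_mul]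
                exact mul_le_mul_of_nonneg_left (ih x.2 h).2 (norm_nonneg _)
              · simp [h]

/-- If `B_[0] ≠ 0`, then `𝓡(B)` is invertible in `ℝ[[x]]`, its inverse has
nonnegative coefficients, and `|(A·B⁻¹)_[k]| ≤ (|A|·𝓡(B)⁻¹)_[k]` for all `k`. -/
theorem psR_inv_majorizes_quotient (A B : PowerSeries ℂ)
    (hB : PowerSeries.constantCoeff B ≠ 0) :
    psR B * (psR B)⁻¹ = 1 ∧
    (∀ k : ℕ, 0 ≤ PowerSeries.coeff k (psR B)⁻¹) ∧
    (∀ k : ℕ, ‖PowerSeries.coeff k (A * B⁻¹)‖ ≤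
      PowerSeries.coeff k (psAbs A * (psR B)⁻¹)) := by
  have hc : PowerSeries.constantCoeff (psR B) ≠ 0 := by
    simp only [psR, ← PowerSeries.coeff_zero_eq_constantCoeff]
    simpa using hB
  refine ⟨PowerSeries.mul_inv_cancel _ hc, fun k => (psR_key B hB k).1, fun k => ?_⟩
  rw [PowerSeries.coeff_mul, PowerSeries.coeff_mul]
  calc ‖∑ x ∈ Finset.HasAntidiagonal.antidiagonal k,
        PowerSeries.coeff x.1 A * PowerSeries.coeff x.2 B⁻¹‖
      ≤ ∑ x ∈ Finset.HasAntidiagonal.antidiagonal k,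
        ‖PowerSeries.coeff x.1 A * PowerSeries.coeff x.2 B⁻¹‖ :=
        norm_sum_le _ _
    _ ≤ _ := by
        apply Finset.sum_le_sum
        intro x hx
        rw [norm_mul]
        simp only [psAbs, PowerSeries.coeff_mk]
        exact mul_le_mul_of_nonneg_left (psR_key B hB x.2).2 (norm_nonneg _)
end

section
/- Let p, q ∈ ℕ with p ≤ q + 1, let a_1, …, a_p ∈ ℂ[[x]] and b_1, …, b_{q+1} ∈ ℂ[[x]] with b_{q+1} = 1, such that no constant coefficient (b_i)_{[0]} is a nonpositive integer, and let z ∈ ℂ[[x]]. For k ∈ ℕ set T(k) = z^k · ∏_{i=1}^p (a_i)_k · ∏_{i=1}^{q+1} ((b_i)_k)^{-1} ∈ ℂ[[x]], where (a)_k = ∏_{j=0}^{k−1} (a + j) is the rising factorial of a power series. Let N ∈ ℕ be such that Re((b_i)_{[0]}) + N > 0 for every i, and set D = |z| · ∏_{i=1}^p (1 + |a_i − b_i| · 𝓡(b_i + N)^{-1}) · ∏_{i=p+1}^{q+1} 𝓡(b_i + N)^{-1} ∈ ℝ[[x]]. If D_{[0]} < 1, then for every m ∈ ℕ the series ∑_{k=N}^∞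 |T(k)_{[m]}| converges and ∑_{k=N}^∞ |T(k)_{[m]}| ≤ (𝓡(1 − D)^{-1} · |T(N)|)_{[m]}. -/
open Finset

/-- For `B ∈ ℂ[[x]]`, `𝓡(B) ∈ ℝ[[x]]` has constant coefficient `|B_[0]|`
and `k`-th coefficient `−|B_[k]|` for `k ≥ 1`. -/
noncomputable def psRC (B : PowerSeries ℂ) : PowerSeries ℝ :=
  PowerSeries.mk fun k =>
    if k = 0 then ‖PowerSeries.coeff 0 B‖
    else -‖PowerSeries.coeff k B‖

/-- The analogous operation `𝓡` for real power series. -/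
noncomputable def psRR (B : PowerSeries ℝ) : PowerSeries ℝ :=
  PowerSeries.mk fun k =>
    if k = 0 then |PowerSeries.coeff 0 B|
    else -|PowerSeries.coeff k B|

/-- The rising factorial `(A)_k = A (A+1) ⋯ (A+k−1)` of a power series. -/
noncomputable def psRising (A : PowerSeries ℂ) (k : ℕ) : PowerSeries ℂ :=
  ∏ j ∈ Finset.range k, (A + (j : PowerSeries ℂ))

namespace TailAux

open PowerSeries

/-- coefficientwise nonnegativity -/
def NN (A : PowerSeries ℝ) : Prop := ∀ m, 0 ≤ coeff m A

/-- coefficientwise inequality -/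
def LE (A B : PowerSeries ℝ) : Prop := ∀ m, coeff m A ≤ coeff m B

theorem LE.rfl {A : PowerSeries ℝ} : LE A A := fun _ => le_rfl

theorem LE.trans {A B C : PowerSeries ℝ} (h1 : LE A B) (h2 : LE B C) : LE A C :=
  fun m => (h1 m).trans (h2 m)

theorem NN.one : NN 1 := by
  intro m
  rw [PowerSeries.coeff_one]
  split <;> norm_num

theorem NN.add {A B : PowerSeries ℝ} (hA : NN A) (hB : NN B) : NN (A + B) := by
  intro m; rw [map_add]; exact add_nonneg (hA m) (hB m)

theorem NN.mul {A B : PowerSeries ℝ} (hA : NN A) (hB : NN B) : NN (A * B) := by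
  intro m
  rw [PowerSeries.coeff_mul]
  exact Finset.sum_nonneg fun p _ => mul_nonneg (hA p.1) (hB p.2)

theorem NN.prod {ι : Type*} {s : Finset ι} {f : ι → PowerSeries ℝ}
    (h : ∀ i ∈ s, NN (f i)) : NN (∏ i ∈ s, f i) :=
  Finset.prod_induction f NN (fun _ _ => NN.mul) NN.one h

theorem NN.pow {A : PowerSeries ℝ} (hA : NN A) (k : ℕ) : NN (A ^ k) := by
  induction k with
  | zero => simpa using NN.one
  | succ n ih => rw [pow_succ]; exact ih.mul hA

theorem LE.add {A B A' B' : PowerSeries ℝ} (h1 : LE A A') (h2 : LE B B') :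
    LE (A + B) (A' + B') := by
  intro m; rw [map_add, map_add]; exact add_le_add (h1 m) (h2 m)

theorem LE.mul {A B A' B' : PowerSeries ℝ} (hA : NN A) (hB : NN B)
    (h1 : LE A A') (h2 : LE B B') : LE (A * B) (A' * B') := by
  intro m
  rw [PowerSeries.coeff_mul, PowerSeries.coeff_mul]
  refine Finset.sum_le_sum fun p _ => ?_
  exact mul_le_mul (h1 p.1) (h2 p.2) (hB p.2) ((hA p.1).trans (h1 p.1))

theorem LE.prod {ι : Type*} {s : Finset ι} {f g : ι → PowerSeries ℝ}
    (hnn : ∀ i ∈ s, NN (f i)) (hle : ∀ i ∈ s, LE (f i) (g i)) :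
    LE (∏ i ∈ s, f i) (∏ i ∈ s, g i) := by
  classical
  induction s using Finset.cons_induction with
  | empty => exact LE.rfl
  | cons a s ha ih =>
    rw [Finset.prod_cons, Finset.prod_cons]
    exact LE.mul (hnn a (Finset.mem_cons_self a s))
      (NN.prod fun i hi => hnn i (Finset.mem_cons_of_mem hi))
      (hle a (Finset.mem_cons_self a s))
      (ih (fun i hi => hnn i (Finset.mem_cons_of_mem hi))
          (fun i hi => hle i (Finset.mem_cons_of_mem hi)))

@[simp] theorem coeff_psAbs (A : PowerSeries ℂ) (m : ℕ) :
    coeff m (psAbs A) = ‖coeff m A‖ := by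
  simp [psAbs]

theorem psAbs_nn (A : PowerSeries ℂ) : NN (psAbs A) := fun m => by
  rw [coeff_psAbs]; positivity

theorem psAbs_one : psAbs 1 = 1 := by
  ext m
  rw [coeff_psAbs, PowerSeries.coeff_one, PowerSeries.coeff_one]
  split <;> simp

theorem psAbs_mul_le (A B : PowerSeries ℂ) : LE (psAbs (A * B)) (psAbs A * psAbs B) := by
  intro m
  rw [coeff_psAbs, PowerSeries.coeff_mul, PowerSeries.coeff_mul]
  refine (norm_sum_le _ _).trans ?_
  refine Finset.sum_le_sum fun p _ => ?_
  rw [norm_mul, coeff_psAbs, coeff_psAbs]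

theorem psAbs_add_le (A B : PowerSeries ℂ) : LE (psAbs (A + B)) (psAbs A + psAbs B) := by
  intro m
  rw [coeff_psAbs, map_add (coeff (R := ℂ) m), map_add (coeff (R := ℝ) m), coeff_psAbs, coeff_psAbs]
  exact norm_add_le _ _

theorem psAbs_prod_le {ι : Type*} (s : Finset ι) (f : ι → PowerSeries ℂ) :
    LE (psAbs (∏ i ∈ s, f i)) (∏ i ∈ s, psAbs (f i)) := by
  classical
  induction s using Finset.cons_induction with
  | empty => simp [psAbs_one]; exact LE.rfl
  | cons a s ha ih =>
    rw [Finset.prod_cons, Finset.prod_cons]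
    exact (psAbs_mul_le _ _).trans
      (LE.mul (psAbs_nn _) (psAbs_nn _) LE.rfl ih)


/-- Rewritten inversion recurrence. -/
theorem coeff_inv' (A : PowerSeries ℝ) {m : ℕ} (hm : m ≠ 0) :
    coeff m A⁻¹ = (constantCoeff A)⁻¹ *
      ∑ x ∈ antidiagonal m,
        (if x.2 < m then (-coeff x.1 A) * coeff x.2 A⁻¹ else 0) := by
  rw [PowerSeries.coeff_inv, if_neg hm, neg_mul, ← mul_neg, ← Finset.sum_neg_distrib]
  refine congrArg _ (Finset.sum_congr rfl fun x _ => ?_)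
  split_ifs <;> ring

theorem fst_ne_zero_of_snd_lt {m : ℕ} {x : ℕ × ℕ} (hx : x ∈ antidiagonal m)
    (h2 : x.2 < m) : x.1 ≠ 0 := by
  rw [Finset.HasAntidiagonal.mem_antidiagonal] at hx
  omega

/-- Key comparison lemma for inverses of `𝓡`-type series. -/
theorem inv_nn_le {R S : PowerSeries ℝ} (hR0 : 0 < coeff 0 R)
    (h0 : coeff 0 R ≤ coeff 0 S)
    (htail : ∀ j : ℕ, j ≠ 0 → coeff j R ≤ coeff j S ∧ coeff j S ≤ 0) :
    ∀ m, 0 ≤ coeff m S⁻¹ ∧ coeff m S⁻¹ ≤ coeff m R⁻¹ := by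
  have hS0 : 0 < coeff 0 S := lt_of_lt_of_le hR0 h0
  intro m
  induction m using Nat.strong_induction_on with
  | _ m ih =>
    rcases Nat.eq_zero_or_pos m with hm | hm
    · subst hm
      rw [PowerSeries.coeff_zero_eq_constantCoeff] at *
      rw [PowerSeries.constantCoeff_inv, PowerSeries.constantCoeff_inv]
      exact ⟨le_of_lt (inv_pos.mpr hS0), (inv_le_inv₀ hS0 hR0).mpr h0⟩
    · have hm' : m ≠ 0 := hm.ne'
      rw [coeff_inv' R hm', coeff_inv' S hm']
      rw [← PowerSeries.coeff_zero_eq_constantCoeff]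
      have hterm : ∀ x ∈ antidiagonal m,
          (0 ≤ if x.2 < m then (-coeff x.1 S) * coeff x.2 S⁻¹ else 0) ∧
          ((if x.2 < m then (-coeff x.1 S) * coeff x.2 S⁻¹ else 0) ≤
            if x.2 < m then (-coeff x.1 R) * coeff x.2 R⁻¹ else 0) := by
        intro x hx
        split_ifs with h2
        · have h1 := fst_ne_zero_of_snd_lt hx h2
          obtain ⟨hRS, hSnp⟩ := htail x.1 h1
          obtain ⟨hinvnn, hinvle⟩ := ih x.2 h2
          constructor
          · exact mul_nonneg (by linarith) hinvnn
          · exact mul_le_mul (by linarith) hinvle hinvnn (by linarith)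
        · exact ⟨le_rfl, le_rfl⟩
      have hsum0 : 0 ≤ ∑ x ∈ antidiagonal m,
          (if x.2 < m then (-coeff x.1 S) * coeff x.2 S⁻¹ else 0) :=
        Finset.sum_nonneg fun x hx => (hterm x hx).1
      have hsum : (∑ x ∈ antidiagonal m,
          (if x.2 < m then (-coeff x.1 S) * coeff x.2 S⁻¹ else 0)) ≤
          ∑ x ∈ antidiagonal m,
          (if x.2 < m then (-coeff x.1 R) * coeff x.2 R⁻¹ else 0) :=
        Finset.sum_le_sum fun x hx => (hterm x hx).2
      constructor
      · exact mul_nonneg (le_of_lt (inv_pos.mpr hS0)) hsum0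
      · exact mul_le_mul ((inv_le_inv₀ hS0 hR0).mpr h0) hsum hsum0
          (le_of_lt (inv_pos.mpr hR0))


theorem psRC_coeff_zero (B : PowerSeries ℂ) :
    coeff 0 (psRC B) = ‖coeff 0 B‖ := by simp [psRC]

theorem psRC_coeff_ne (B : PowerSeries ℂ) {j : ℕ} (hj : j ≠ 0) :
    coeff j (psRC B) = -‖coeff j B‖ := by simp [psRC, hj]

theorem psRC_constantCoeff (B : PowerSeries ℂ) :
    constantCoeff (psRC B) = ‖constantCoeff B‖ := by
  rw [← PowerSeries.coeff_zero_eq_constantCoeff_apply, psRC_coeff_zero,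
    PowerSeries.coeff_zero_eq_constantCoeff_apply]

theorem psRC_constantCoeff_pos {B : PowerSeries ℂ} (hB : constantCoeff B ≠ 0) :
    0 < coeff 0 (psRC B) := by
  rw [PowerSeries.coeff_zero_eq_constantCoeff_apply, psRC_constantCoeff]
  exact norm_pos_iff.mpr hB

theorem psRC_inv_nn {B : PowerSeries ℂ} (hB : constantCoeff B ≠ 0) :
    NN (psRC B)⁻¹ := by
  intro m
  refine (inv_nn_le (R := psRC B) (S := psRC B) (psRC_constantCoeff_pos hB) le_rfl ?_ m).1
  intro j hj
  rw [psRC_coeff_ne B hj]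
  exact ⟨le_rfl, neg_nonpos.mpr (norm_nonneg _)⟩

theorem psAbs_inv_le {B : PowerSeries ℂ} (hB : constantCoeff B ≠ 0) :
    LE (psAbs B⁻¹) (psRC B)⁻¹ := by
  intro m
  induction m using Nat.strong_induction_on with
  | _ m ih =>
    rcases Nat.eq_zero_or_pos m with hm | hm
    · subst hm
      have h1 : coeff 0 (psAbs B⁻¹) = (‖constantCoeff B‖)⁻¹ := by
        rw [coeff_psAbs, PowerSeries.coeff_zero_eq_constantCoeff_apply,
          PowerSeries.constantCoeff_inv, norm_inv]
      have h2 : coeff 0 (psRC B)⁻¹ = (‖constantCoeff B‖)⁻¹ := by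
        rw [PowerSeries.coeff_zero_eq_constantCoeff_apply, PowerSeries.constantCoeff_inv,
          psRC_constantCoeff]
      rw [h1, h2]
    · have hm' : m ≠ 0 := hm.ne'
      rw [coeff_psAbs, PowerSeries.coeff_inv, if_neg hm', coeff_inv' _ hm',
        psRC_constantCoeff, norm_mul, norm_neg, norm_inv]
      refine mul_le_mul le_rfl ?_ (norm_nonneg _) (by positivity)
      refine (norm_sum_le _ _).trans ?_
      refine Finset.sum_le_sum fun x hx => ?_
      by_cases h2 : x.2 < m
      · rw [if_pos h2, if_pos h2, norm_mul,
          psRC_coeff_ne B (fst_ne_zero_of_snd_lt hx h2), neg_neg]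
        refine mul_le_mul le_rfl ?_ (norm_nonneg _) (norm_nonneg _)
        exact (coeff_psAbs B⁻¹ x.2) ▸ ih x.2 h2
      · rw [if_neg h2, if_neg h2, norm_zero]


theorem coeff_add_natCast (B : PowerSeries ℂ) (c : ℕ) {j : ℕ} (hj : j ≠ 0) :
    coeff j (B + (c : PowerSeries ℂ)) = coeff j B := by
  rw [← map_natCast (PowerSeries.C (R := ℂ)) c, map_add, PowerSeries.coeff_C, if_neg hj, add_zero]

theorem constantCoeff_add_natCast (B : PowerSeries ℂ) (c : ℕ) :
    constantCoeff (B + (c : PowerSeries ℂ)) = constantCoeff B + (c : ℂ) := by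
  rw [map_add, map_natCast]

theorem constantCoeff_add_natCast_ne {B : PowerSeries ℂ} {N : ℕ}
    (hb : 0 < (constantCoeff B).re + N) (c : ℕ) (hc : N ≤ c) :
    constantCoeff (B + (c : PowerSeries ℂ)) ≠ 0 := by
  rw [constantCoeff_add_natCast]
  intro h
  have := congrArg Complex.re h
  simp only [Complex.add_re, Complex.natCast_re, Complex.zero_re] at this
  have hcN : (N : ℝ) ≤ (c : ℝ) := Nat.cast_le.mpr hc
  linarith

theorem abs_add_natCast_mono {w : ℂ} {N : ℕ} (hb : 0 < w.re + N) {c : ℕ} (hc : N ≤ c) :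
    ‖w + (N : ℂ)‖ ≤ ‖w + (c : ℂ)‖ := by
  rw [Complex.norm_def, Complex.norm_def]
  refine Real.sqrt_le_sqrt ?_
  rw [Complex.normSq_apply, Complex.normSq_apply]
  simp only [Complex.add_re, Complex.add_im, Complex.natCast_re, Complex.natCast_im, add_zero]
  have hcN : (N : ℝ) ≤ (c : ℝ) := Nat.cast_le.mpr hc
  nlinarith

theorem psRC_shift {b : PowerSeries ℂ} {N : ℕ} (hb : 0 < (constantCoeff b).re + N)
    {c : ℕ} (hc : N ≤ c) :
    NN (psRC (b + (c : PowerSeries ℂ)))⁻¹ ∧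
    LE (psRC (b + (c : PowerSeries ℂ)))⁻¹ (psRC (b + (N : PowerSeries ℂ)))⁻¹ := by
  have h := inv_nn_le (R := psRC (b + (N : PowerSeries ℂ)))
    (S := psRC (b + (c : PowerSeries ℂ)))
    (psRC_constantCoeff_pos (constantCoeff_add_natCast_ne hb N le_rfl))
    (by
      rw [psRC_coeff_zero, psRC_coeff_zero, PowerSeries.coeff_zero_eq_constantCoeff_apply,
        PowerSeries.coeff_zero_eq_constantCoeff_apply, constantCoeff_add_natCast,
        constantCoeff_add_natCast]
      exact abs_add_natCast_mono hb hc)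
    (by
      intro j hj
      rw [psRC_coeff_ne _ hj, psRC_coeff_ne _ hj, coeff_add_natCast _ _ hj,
        coeff_add_natCast _ _ hj]
      exact ⟨le_rfl, neg_nonpos.mpr (norm_nonneg _)⟩)
  exact ⟨fun m => (h m).1, fun m => (h m).2⟩

/-- The combined bound `|(b + c)⁻¹| ≤ 𝓡(b + N)⁻¹` for `c ≥ N`. -/
theorem psAbs_inv_shift_le {b : PowerSeries ℂ} {N : ℕ}
    (hb : 0 < (constantCoeff b).re + N) {c : ℕ} (hc : N ≤ c) :
    LE (psAbs ((b + (c : PowerSeries ℂ))⁻¹)) (psRC (b + (N : PowerSeries ℂ)))⁻¹ :=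
  (psAbs_inv_le (constantCoeff_add_natCast_ne hb c hc)).trans (psRC_shift hb hc).2


theorem geom_summable {f g : ℕ → ℝ} {c : ℝ} (hc0 : 0 ≤ c) (hc1 : c < 1)
    (hf : ∀ k, 0 ≤ f k) (hg : Summable g) (hg0 : ∀ k, 0 ≤ g k)
    (hrec : ∀ k, f (k + 1) = c * f k + g k) : Summable f := by
  have hG : ∀ n, ∑ i ∈ range n, g i ≤ ∑' i, g i := fun n => Summable.sum_le_tsum _ (fun i _ => hg0 i) hg
  have key : ∀ n, ∑ i ∈ range n, f i ≤ (f 0 + ∑' i, g i) / (1 - c) := by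
    intro n
    have h1 : ∑ i ∈ range n, f i ≤ ∑ i ∈ range (n + 1), f i := by
      rw [Finset.sum_range_succ]; linarith [hf n]
    have h2 : ∑ i ∈ range (n + 1), f i =
        f 0 + (c * ∑ i ∈ range n, f i + ∑ i ∈ range n, g i) := by
      rw [Finset.sum_range_succ']
      simp only [hrec]
      rw [Finset.sum_add_distrib, ← Finset.mul_sum]
      ring
    have h3 : (1 - c) * ∑ i ∈ range n, f i ≤ f 0 + ∑' i, g i := by
      have := hG n
      nlinarith [h1, h2]
    rw [le_div_iff₀ (by linarith : (0:ℝ) < 1 - c)]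
    nlinarith [h3]
  exact summable_of_sum_range_le hf key

theorem summable_coeff_pow {D : PowerSeries ℝ} (hD : NN D) (hD1 : coeff 0 D < 1) :
    ∀ m, Summable fun k : ℕ => coeff m (D ^ k) := by
  intro m
  induction m using Nat.strong_induction_on with
  | _ m ih =>
    set g : ℕ → ℝ := fun k =>
      ∑ i ∈ range m, coeff (i + 1) D * coeff (m - (i + 1)) (D ^ k) with hg_def
    have hrec : ∀ k, coeff m (D ^ (k + 1)) = coeff 0 D * coeff m (D ^ k) + g k := by
      intro k
      rw [pow_succ, mul_comm (D ^ k) D, PowerSeries.coeff_mul,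
        Finset.Nat.sum_antidiagonal_eq_sum_range_succ_mk, Finset.sum_range_succ']
      simp only [Nat.sub_zero]
      ring
    have hg : Summable g := by
      refine summable_sum fun i hi => ?_
      have hlt : m - (i + 1) < m := by
        have := Finset.mem_range.mp hi
        omega
      exact (ih _ hlt).mul_left _
    exact geom_summable (hD 0) hD1 (fun k => hD.pow k m) hg
      (fun k => Finset.sum_nonneg fun i _ => mul_nonneg (hD _) (hD.pow k _)) hrec

theorem tsum_coeff_pow_eq_inv {D : PowerSeries ℝ} (hD : NN D) (hD1 : coeff 0 D < 1) :
    PowerSeries.mk (fun m => ∑' k : ℕ, coeff m (D ^ k)) = (1 - D)⁻¹ := by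
  have hc : constantCoeff (1 - D) ≠ 0 := by
    rw [map_sub, map_one, ← PowerSeries.coeff_zero_eq_constantCoeff_apply]
    intro h
    rw [sub_eq_zero] at h
    exact absurd h.symm (ne_of_lt hD1)
  rw [PowerSeries.eq_inv_iff_mul_eq_one hc]
  ext m
  have hsum := summable_coeff_pow hD hD1
  rw [mul_sub, mul_one, map_sub, PowerSeries.coeff_mk, PowerSeries.coeff_mul]
  have h1 : ∑ x ∈ antidiagonal m,
      coeff x.1 (PowerSeries.mk fun m => ∑' k : ℕ, coeff m (D ^ k)) * coeff x.2 D
      = ∑' k : ℕ, coeff m (D ^ (k + 1)) := by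
    calc ∑ x ∈ antidiagonal m,
        coeff x.1 (PowerSeries.mk fun m => ∑' k : ℕ, coeff m (D ^ k)) * coeff x.2 D
        = ∑ x ∈ antidiagonal m, ∑' k : ℕ, coeff x.1 (D ^ k) * coeff x.2 D := by
          refine Finset.sum_congr rfl fun x _ => ?_
          rw [PowerSeries.coeff_mk, tsum_mul_right]
      _ = ∑' k : ℕ, ∑ x ∈ antidiagonal m, coeff x.1 (D ^ k) * coeff x.2 D :=
          (Summable.tsum_finsetSum (fun x _ => ((hsum x.1).mul_right _))).symm
      _ = ∑' k : ℕ, coeff m (D ^ (k + 1)) := by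
          congr 1
          funext k
          rw [← PowerSeries.coeff_mul, ← pow_succ]
  rw [h1, Summable.tsum_eq_zero_add (hsum m), pow_zero]
  ring

end TailAux

open TailAux PowerSeries in
/-- Tail bound for hypergeometric series with power series parameters and
argument (the power series version of Theorem 4.1 of the paper). -/
theorem pFq_tail_bound_powerSeries (p q : ℕ) (hpq : p ≤ q + 1)
    (a b : ℕ → PowerSeries ℂ)
    (hblast : b q = 1)
    (hbint : ∀ i ≤ q, ∀ m : ℕ, PowerSeries.constantCoeff (b i) ≠ -(m : ℂ))
    (z : PowerSeries ℂ) (N : ℕ)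
    (hN : ∀ i ≤ q, 0 < (PowerSeries.constantCoeff (b i)).re + N)
    (T : ℕ → PowerSeries ℂ)
    (hT : ∀ k, T k = z ^ k * (∏ i ∈ range p, psRising (a i) k)
        * ∏ i ∈ range (q + 1), (psRising (b i) k)⁻¹)
    (D : PowerSeries ℝ)
    (hD : D = psAbs z
        * (∏ i ∈ range p,
            (1 + psAbs (a i - b i) * (psRC (b i + (N : PowerSeries ℂ)))⁻¹))
        * ∏ i ∈ Finset.Ico p (q + 1), (psRC (b i + (N : PowerSeries ℂ)))⁻¹)
    (hD1 : PowerSeries.constantCoeff D < 1) :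
    ∀ m : ℕ,
      Summable (fun k : ℕ => ‖PowerSeries.coeff m (T (N + k))‖) ∧
      ∑' k : ℕ, ‖PowerSeries.coeff m (T (N + k))‖ ≤
        PowerSeries.coeff m ((psRR (1 - D))⁻¹ * psAbs (T N)) := by
  -- basic nonvanishing facts
  have hbj : ∀ i, i ≤ q → ∀ j : ℕ, constantCoeff (b i + (j : PowerSeries ℂ)) ≠ 0 := by
    intro i hi j h
    rw [constantCoeff_add_natCast] at h
    exact hbint i hi j (eq_neg_of_add_eq_zero_left h)
  -- the ratio series
  set Q : ℕ → PowerSeries ℂ := fun k =>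
    z * (∏ i ∈ range p, (1 + (a i - b i) * (b i + ((N + k : ℕ) : PowerSeries ℂ))⁻¹))
      * ∏ i ∈ Finset.Ico p (q + 1), (b i + ((N + k : ℕ) : PowerSeries ℂ))⁻¹ with hQ
  -- the recurrence step
  have hstep : ∀ k : ℕ, T (N + k + 1) = T (N + k) * Q k := by
    intro k
    have hn : True := trivial
    have hpair : ∀ i ∈ range p,
        (1 + (a i - b i) * (b i + ((N + k : ℕ) : PowerSeries ℂ))⁻¹)
        = (a i + ((N + k : ℕ) : PowerSeries ℂ)) * (b i + ((N + k : ℕ) : PowerSeries ℂ))⁻¹ := by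
      intro i hi
      have hip : i ≤ q := by have := Finset.mem_range.mp hi; omega
      have hcancel := PowerSeries.mul_inv_cancel _ (hbj i hip (N + k))
      linear_combination (-1 : PowerSeries ℂ) * hcancel
    have h1 : ∏ i ∈ range p, psRising (a i) (N + k + 1)
        = (∏ i ∈ range p, psRising (a i) (N + k))
          * ∏ i ∈ range p, (a i + ((N + k : ℕ) : PowerSeries ℂ)) := by
      rw [← Finset.prod_mul_distrib]
      exact Finset.prod_congr rfl fun i _ => Finset.prod_range_succ _ _
    have h2 : ∏ i ∈ range (q + 1), (psRising (b i) (N + k + 1))⁻¹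
        = (∏ i ∈ range (q + 1), (psRising (b i) (N + k))⁻¹)
          * ∏ i ∈ range (q + 1), (b i + ((N + k : ℕ) : PowerSeries ℂ))⁻¹ := by
      rw [← Finset.prod_mul_distrib]
      refine Finset.prod_congr rfl fun i hi => ?_
      rw [show psRising (b i) (N + k + 1) = psRising (b i) (N + k) * (b i + ((N + k : ℕ) : PowerSeries ℂ))
          from Finset.prod_range_succ _ _,
        PowerSeries.mul_inv_rev, mul_comm]
    have h3 : ∏ i ∈ range p, (1 + (a i - b i) * (b i + ((N + k : ℕ) : PowerSeries ℂ))⁻¹)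
        = (∏ i ∈ range p, (a i + ((N + k : ℕ) : PowerSeries ℂ)))
          * ∏ i ∈ range p, (b i + ((N + k : ℕ) : PowerSeries ℂ))⁻¹ := by
      rw [← Finset.prod_mul_distrib]
      exact Finset.prod_congr rfl hpair
    have h4 : (∏ i ∈ range p, (b i + ((N + k : ℕ) : PowerSeries ℂ))⁻¹)
        * ∏ i ∈ Finset.Ico p (q + 1), (b i + ((N + k : ℕ) : PowerSeries ℂ))⁻¹
        = ∏ i ∈ range (q + 1), (b i + ((N + k : ℕ) : PowerSeries ℂ))⁻¹ :=
      Finset.prod_range_mul_prod_Ico _ hpq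
    rw [hT (N + k + 1), hT (N + k), hQ]
    beta_reduce
    rw [h1, h2, h3, ← h4, pow_succ]
    ring
  -- nonnegativity of D and of inverse factors
  have hiNN : ∀ i, i ≤ q → NN (psRC (b i + (N : PowerSeries ℂ)))⁻¹ := fun i hi =>
    psRC_inv_nn (hbj i hi N)
  have hDnn : NN D := by
    rw [hD]
    refine NN.mul (NN.mul (psAbs_nn z) (NN.prod fun i hi => ?_)) (NN.prod fun i hi => ?_)
    · have hip : i ≤ q := by have := Finset.mem_range.mp hi; omega
      exact NN.add NN.one (NN.mul (psAbs_nn _) (hiNN i hip))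
    · have hip : i ≤ q := by have := Finset.mem_Ico.mp hi; omega
      exact hiNN i hip
  -- the coefficientwise bound |Q k| ≤ D
  have hQb : ∀ k, LE (psAbs (Q k)) D := by
    intro k
    have habs : LE (psAbs (Q k))
        (psAbs z * (∏ i ∈ range p,
            psAbs (1 + (a i - b i) * (b i + ((N + k : ℕ) : PowerSeries ℂ))⁻¹))
          * ∏ i ∈ Finset.Ico p (q + 1),
            psAbs ((b i + ((N + k : ℕ) : PowerSeries ℂ))⁻¹)) := by
      rw [hQ]
      refine (psAbs_mul_le _ _).trans (LE.mul (psAbs_nn _) (psAbs_nn _) ?_ ?_)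
      · exact (psAbs_mul_le _ _).trans
          (LE.mul (psAbs_nn _) (psAbs_nn _) LE.rfl (psAbs_prod_le _ _))
      · exact psAbs_prod_le _ _
    refine habs.trans ?_
    rw [hD]
    refine LE.mul (NN.mul (psAbs_nn _) (NN.prod fun i _ => psAbs_nn _))
      (NN.prod fun i _ => psAbs_nn _)
      (LE.mul (psAbs_nn _) (NN.prod fun i _ => psAbs_nn _) LE.rfl ?_) ?_
    · refine LE.prod (fun i _ => psAbs_nn _) fun i hi => ?_
      have hip : i ≤ q := by have := Finset.mem_range.mp hi; omega
      refine (psAbs_add_le _ _).trans ?_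
      rw [psAbs_one]
      refine LE.add LE.rfl ?_
      refine (psAbs_mul_le _ _).trans
        (LE.mul (psAbs_nn _) (psAbs_nn _) LE.rfl ?_)
      exact psAbs_inv_shift_le (hN i hip) (Nat.le_add_right N k)
    · refine LE.prod (fun i _ => psAbs_nn _) fun i hi => ?_
      have hip : i ≤ q := by have := Finset.mem_Ico.mp hi; omega
      exact psAbs_inv_shift_le (hN i hip) (Nat.le_add_right N k)
  -- the iterated bound
  have hTb : ∀ k : ℕ, LE (psAbs (T (N + k))) (psAbs (T N) * D ^ k) := by
    intro k
    induction k with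
    | zero => rw [pow_zero, mul_one]; exact LE.rfl
    | succ k ih =>
      rw [show N + (k + 1) = N + k + 1 from rfl, pow_succ, ← mul_assoc, hstep k]
      exact (psAbs_mul_le (T (N + k)) (Q k)).trans
        (LE.mul (psAbs_nn (T (N + k))) (psAbs_nn (Q k)) ih (hQb k))
  -- summability data
  have hD0 : coeff 0 D < 1 := by
    rw [PowerSeries.coeff_zero_eq_constantCoeff_apply]; exact hD1
  have hsumpow := summable_coeff_pow hDnn hD0
  have hSinv := tsum_coeff_pow_eq_inv hDnn hD0
  have hRR : psRR (1 - D) = 1 - D := by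
    ext j
    simp only [psRR, PowerSeries.coeff_mk]
    rcases eq_or_ne j 0 with rfl | hj
    · rw [if_pos rfl, map_sub, PowerSeries.coeff_one, if_pos rfl]
      rw [abs_of_nonneg (by linarith [hD0])]
    · rw [if_neg hj, map_sub, PowerSeries.coeff_one, if_neg hj, zero_sub, abs_neg,
        abs_of_nonneg (hDnn j)]
  intro m
  set h : ℕ → ℝ := fun k => coeff m (psAbs (T N) * D ^ k) with hh
  have hhexp : ∀ k, h k = ∑ x ∈ antidiagonal m,
      coeff x.1 (psAbs (T N)) * coeff x.2 (D ^ k) := by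
    intro k
    rw [hh]
    exact PowerSeries.coeff_mul _ _ _
  have hhsum : Summable h := by
    refine Summable.congr ?_ (fun k => (hhexp k).symm)
    exact summable_sum fun x _ => (hsumpow x.2).mul_left _
  have hle : ∀ k, ‖coeff m (T (N + k))‖ ≤ h k := by
    intro k
    have := hTb k m
    rwa [coeff_psAbs] at this
  have hfsum : Summable (fun k : ℕ => ‖coeff m (T (N + k))‖) :=
    Summable.of_nonneg_of_le (fun k => norm_nonneg _) hle hhsum
  refine ⟨hfsum, ?_⟩
  refine (Summable.tsum_le_tsum hle hfsum hhsum).trans (le_of_eq ?_)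
  calc ∑' k : ℕ, h k
      = ∑' k : ℕ, ∑ x ∈ antidiagonal m,
          coeff x.1 (psAbs (T N)) * coeff x.2 (D ^ k) := by
        exact tsum_congr hhexp
    _ = ∑ x ∈ antidiagonal m, ∑' k : ℕ,
          coeff x.1 (psAbs (T N)) * coeff x.2 (D ^ k) :=
        Summable.tsum_finsetSum (fun x _ => (hsumpow x.2).mul_left _)
    _ = ∑ x ∈ antidiagonal m, coeff x.1 (psAbs (T N)) * coeff x.2 ((1 - D)⁻¹) := by
        refine Finset.sum_congr rfl fun x _ => ?_
        rw [tsum_mul_left, ← hSinv, PowerSeries.coeff_mk]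
    _ = coeff m ((psRR (1 - D))⁻¹ * psAbs (T N)) := by
        rw [hRR, mul_comm, PowerSeries.coeff_mul]
end

section
/- Let a, b, c, z_0 ∈ ℂ with z_0 ≠ 0 and z_0 ≠ 1. Let f : ℕ → ℂ satisfy, for all k ∈ ℕ, the recurrence R_2(k) f(k+2) + R_1(k) f(k+1) + R_0(k) f(k) = 0, where R_2(k) = (k+1)(k+2)(z_0 − 1) z_0, R_1(k) = (k+1)(2k + a + b + 1) z_0 − (k+1)(k + c), and R_0(k) = (a + k)(b + k). Let ν, M_0, M_1, N, A be real numbers satisfying ν ≥ max(1/|z_0 − 1|, 1/|z_0|), M_0 ≥ 2 ν |ab|, M_1 ≥ ν (|a + b + 1| + 2|c|), N ≥ max(√(2 M_0), 2 M_1) / ν, and A ≥ max(|f(0)|, |f(1)| / (ν (N + 1))). Then for every k ∈ ℕ, |f(k)| ≤ A · ((N+1)_k / k!) · ν^k. -/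
open Finset

noncomputable def gaux (z c₀ d : ℂ) (f : ℕ → ℂ) : ℕ → ℂ
  | 0 => (c₀ * f 1 + d * f 0) / z
  | (k+1) => (c₀ * ((k : ℂ) + 2) * f (k+2) + d * f (k+1) - gaux z c₀ d f k) / z

lemma gaux_zero_mul {z : ℂ} (hz : z ≠ 0) (c₀ d : ℂ) (f : ℕ → ℂ) :
    z * gaux z c₀ d f 0 = c₀ * f 1 + d * f 0 := by
  rw [gaux, mul_comm, div_mul_cancel₀ _ hz]

lemma gaux_succ_mul {z : ℂ} (hz : z ≠ 0) (c₀ d : ℂ) (f : ℕ → ℂ) (k : ℕ) :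
    z * gaux z c₀ d f (k+1)
      = c₀ * ((k : ℂ) + 2) * f (k+2) + d * f (k+1) - gaux z c₀ d f k := by
  rw [gaux, mul_comm, div_mul_cancel₀ _ hz]

lemma gaux_abs_zero {z : ℂ} {ν : ℝ} (hz : z ≠ 0) (hν : 1 / ‖z‖ ≤ ν)
    (c₀ d : ℂ) (f : ℕ → ℂ) :
    ‖gaux z c₀ d f 0‖
      ≤ ν * (‖c₀‖ * ‖f 1‖ + ‖d‖ * ‖f 0‖) := by
  have hzpos : 0 < ‖z‖ := norm_pos_iff.mpr hz
  rw [gaux, norm_div]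
  have h1 : ‖c₀ * f 1 + d * f 0‖
      ≤ ‖c₀‖ * ‖f 1‖ + ‖d‖ * ‖f 0‖ := by
    refine (norm_add_le _ _).trans ?_
    rw [norm_mul, norm_mul]
  calc ‖c₀ * f 1 + d * f 0‖ / ‖z‖
      ≤ (‖c₀‖ * ‖f 1‖ + ‖d‖ * ‖f 0‖) / ‖z‖ := by
        gcongr
    _ = (‖c₀‖ * ‖f 1‖ + ‖d‖ * ‖f 0‖) * (1 / ‖z‖) := by
        ring
    _ ≤ (‖c₀‖ * ‖f 1‖ + ‖d‖ * ‖f 0‖) * ν := by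
        refine mul_le_mul_of_nonneg_left hν ?_
        positivity
    _ = ν * (‖c₀‖ * ‖f 1‖ + ‖d‖ * ‖f 0‖) := by ring

lemma gaux_abs_succ {z : ℂ} {ν : ℝ} (hz : z ≠ 0) (hν : 1 / ‖z‖ ≤ ν)
    (c₀ d : ℂ) (f : ℕ → ℂ) (k : ℕ) :
    ‖gaux z c₀ d f (k+1)‖
      ≤ ν * (‖c₀‖ * (((k:ℝ) + 2) * ‖f (k+2)‖)
          + ‖d‖ * ‖f (k+1)‖ + ‖gaux z c₀ d f k‖) := by
  have hzpos : 0 < ‖z‖ := norm_pos_iff.mpr hz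
  rw [gaux, norm_div]
  have hk2 : ‖(k : ℂ) + 2‖ = (k : ℝ) + 2 := by
    have h : ((k : ℂ) + 2) = ((k + 2 : ℕ) : ℂ) := by push_cast; ring
    rw [h, Complex.norm_natCast]; push_cast; ring
  have h1 : ‖c₀ * ((k : ℂ) + 2) * f (k+2) + d * f (k+1) - gaux z c₀ d f k‖
      ≤ ‖c₀‖ * (((k:ℝ) + 2) * ‖f (k+2)‖)
          + ‖d‖ * ‖f (k+1)‖ + ‖gaux z c₀ d f k‖ := by
    rw [sub_eq_add_neg]
    refine (norm_add_le _ _).trans ?_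
    rw [norm_neg]
    refine add_le_add ?_ le_rfl
    refine (norm_add_le _ _).trans ?_
    rw [norm_mul, norm_mul, norm_mul, hk2]
    exact add_le_add (le_of_eq (by ring)) le_rfl
  calc ‖c₀ * ((k : ℂ) + 2) * f (k+2) + d * f (k+1) - gaux z c₀ d f k‖ / ‖z‖
      ≤ (‖c₀‖ * (((k:ℝ) + 2) * ‖f (k+2)‖)
          + ‖d‖ * ‖f (k+1)‖ + ‖gaux z c₀ d f k‖) / ‖z‖ := by
        gcongr
    _ = (‖c₀‖ * (((k:ℝ) + 2) * ‖f (k+2)‖)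
          + ‖d‖ * ‖f (k+1)‖ + ‖gaux z c₀ d f k‖) * (1 / ‖z‖) := by
        ring
    _ ≤ (‖c₀‖ * (((k:ℝ) + 2) * ‖f (k+2)‖)
          + ‖d‖ * ‖f (k+1)‖ + ‖gaux z c₀ d f k‖) * ν := by
        refine mul_le_mul_of_nonneg_left hν ?_
        positivity
    _ = ν * (‖c₀‖ * (((k:ℝ) + 2) * ‖f (k+2)‖)
          + ‖d‖ * ‖f (k+1)‖ + ‖gaux z c₀ d f k‖) := by ring

lemma gaux_main (a b c z0 : ℂ) (h0 : z0 ≠ 0) (h1 : z0 ≠ 1)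
    (f : ℕ → ℂ)
    (hrec : ∀ k : ℕ,
      ((k : ℂ) + 1) * ((k : ℂ) + 2) * (z0 - 1) * z0 * f (k + 2)
      + (((k : ℂ) + 1) * (2 * (k : ℂ) + a + b + 1) * z0
          - ((k : ℂ) + 1) * ((k : ℂ) + c)) * f (k + 1)
      + (a + (k : ℂ)) * (b + (k : ℂ)) * f k = 0) :
    ∀ k : ℕ, ((k : ℂ) + 1) * ((k : ℂ) + 2) * f (k + 2)
      = gaux z0 (-c) (a*b) f k + gaux (z0-1) (c-a-b-1) (-(a*b)) f k := by
  have hz1 : z0 - 1 ≠ 0 := sub_ne_zero.mpr h1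
  have hzz : z0 * (z0 - 1) ≠ 0 := mul_ne_zero h0 hz1
  have base0 : ((0 : ℂ) + 1) * ((0 : ℂ) + 2) * f 2
      = gaux z0 (-c) (a*b) f 0 + gaux (z0-1) (c-a-b-1) (-(a*b)) f 0 := by
    have e0 := gaux_zero_mul h0 (-c) (a*b) f
    have e1 := gaux_zero_mul hz1 (c-a-b-1) (-(a*b)) f
    have hr := hrec 0
    push_cast at hr
    apply mul_left_cancel₀ hzz
    linear_combination -(z0-1) * e0 - z0 * e1 + hr
  have step : ∀ k : ℕ,
      ((k : ℂ) + 1) * ((k : ℂ) + 2) * f (k + 2)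
        = gaux z0 (-c) (a*b) f k + gaux (z0-1) (c-a-b-1) (-(a*b)) f k →
      (((k+1 : ℕ) : ℂ) + 1) * (((k+1 : ℕ) : ℂ) + 2) * f (k + 3)
        = gaux z0 (-c) (a*b) f (k+1) + gaux (z0-1) (c-a-b-1) (-(a*b)) f (k+1) →
      (((k+2 : ℕ) : ℂ) + 1) * (((k+2 : ℕ) : ℂ) + 2) * f (k + 4)
        = gaux z0 (-c) (a*b) f (k+2) + gaux (z0-1) (c-a-b-1) (-(a*b)) f (k+2) := by
    intro k ih0 ih1
    have e3 := gaux_succ_mul h0 (-c) (a*b) f k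
    have e4 := gaux_succ_mul hz1 (c-a-b-1) (-(a*b)) f k
    have e3' := gaux_succ_mul h0 (-c) (a*b) f (k+1)
    have e4' := gaux_succ_mul hz1 (c-a-b-1) (-(a*b)) f (k+1)
    have hr := hrec (k+2)
    push_cast at hr e3' e4' ih1 ⊢
    apply mul_left_cancel₀ hzz
    linear_combination -(z0-1) * e3' - z0 * e4' - e3 - e4 - (2*z0-1) * ih1 - ih0 + hr
  -- base case k = 1
  have base1 : ((1 : ℂ) + 1) * ((1 : ℂ) + 2) * f 3
      = gaux z0 (-c) (a*b) f 1 + gaux (z0-1) (c-a-b-1) (-(a*b)) f 1 := by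
    have e0 := gaux_zero_mul h0 (-c) (a*b) f
    have e1 := gaux_zero_mul hz1 (c-a-b-1) (-(a*b)) f
    have e3 := gaux_succ_mul h0 (-c) (a*b) f 0
    have e4 := gaux_succ_mul hz1 (c-a-b-1) (-(a*b)) f 0
    have hr := hrec 1
    push_cast at hr e3 e4
    apply mul_left_cancel₀ hzz
    linear_combination -(z0-1) * e3 - z0 * e4 - e0 - e1 - (2*z0-1) * base0 + hr
  intro k
  induction k using Nat.twoStepInduction with
  | zero => exact_mod_cast base0
  | one => exact_mod_cast base1
  | more n ih0 ih1 =>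
      have := step n (by exact_mod_cast ih0) (by exact_mod_cast ih1)
      exact_mod_cast this

set_option maxHeartbeats 1000000 in
/-- Theorem 7.1 of the paper: a Cauchy–Kovalevskaya type bound
`|f(k)| ≤ A · binom(N+k, k) · ν^k` for the Taylor coefficients of a solution
of the Gauss hypergeometric ODE recentered at `z₀`. Here
`binom(N+k, k) = (N+1)_k / k!` with `(N+1)_k = ∏_{j<k} (N+1+j)`. -/
theorem gauss2F1_coeff_majorant (a b c z0 : ℂ) (h0 : z0 ≠ 0) (h1 : z0 ≠ 1)
    (f : ℕ → ℂ)
    (hrec : ∀ k : ℕ,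
      ((k : ℂ) + 1) * ((k : ℂ) + 2) * (z0 - 1) * z0 * f (k + 2)
      + (((k : ℂ) + 1) * (2 * (k : ℂ) + a + b + 1) * z0
          - ((k : ℂ) + 1) * ((k : ℂ) + c)) * f (k + 1)
      + (a + (k : ℂ)) * (b + (k : ℂ)) * f k = 0)
    (ν M0 M1 N A : ℝ)
    (hν : ν ≥ max (1 / ‖z0 - 1‖) (1 / ‖z0‖))
    (hM0 : M0 ≥ 2 * ν * ‖a * b‖)
    (hM1 : M1 ≥ ν * (‖a + b + 1‖ + 2 * ‖c‖))
    (hN : N ≥ max (Real.sqrt (2 * M0)) (2 * M1) / ν)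
    (hA : A ≥ max (‖f 0‖) (‖f 1‖ / (ν * (N + 1)))) :
    ∀ k : ℕ, ‖f k‖ ≤
      A * ((∏ j ∈ Finset.range k, (N + 1 + (j : ℝ))) / (k.factorial : ℝ))
        * ν ^ k := by
  have hz1 : z0 - 1 ≠ 0 := sub_ne_zero.mpr h1
  have hν2 : 1 / ‖z0‖ ≤ ν := le_trans (le_max_right _ _) hν
  have hν1 : 1 / ‖z0 - 1‖ ≤ ν := le_trans (le_max_left _ _) hν
  have habs0 : 0 < ‖z0‖ := norm_pos_iff.mpr h0
  have hνpos : 0 < ν := lt_of_lt_of_le (by positivity) hν2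
  have hM0nn : 0 ≤ M0 := le_trans (by positivity) hM0
  have hM1nn : 0 ≤ M1 :=
    le_trans (mul_nonneg hνpos.le (by positivity)) hM1
  have hmaxN := (div_le_iff₀ hνpos).mp hN
  have hνN1 : 2 * M1 ≤ ν * N := by
    have h := le_max_right (Real.sqrt (2 * M0)) (2 * M1)
    linarith [hmaxN]
  have hsq : Real.sqrt (2 * M0) ≤ ν * N := by
    have h := le_max_left (Real.sqrt (2 * M0)) (2 * M1)
    linarith [hmaxN]
  have hνN2 : 2 * M0 ≤ (ν * N) ^ 2 := by
    calc 2 * M0 = (Real.sqrt (2 * M0)) ^ 2 := (Real.sq_sqrt (by linarith)).symm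
      _ ≤ (ν * N) ^ 2 := pow_le_pow_left₀ (Real.sqrt_nonneg _) hsq 2
  have hνN0 : 0 ≤ ν * N := le_trans (Real.sqrt_nonneg _) hsq
  have hNnn : 0 ≤ N := by nlinarith [hνpos, hνN0]
  have hAnn : 0 ≤ A := le_trans (le_trans (norm_nonneg (f 0)) (le_max_left _ _)) hA
  obtain ⟨u, hu⟩ : ∃ u : ℕ → ℝ, u = fun k =>
      A * ((∏ j ∈ Finset.range k, (N + 1 + (j : ℝ))) / (k.factorial : ℝ)) * ν ^ k := ⟨_, rfl⟩
  have hu_nonneg : ∀ k, 0 ≤ u k := by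
    intro k
    simp only [hu]
    refine mul_nonneg (mul_nonneg hAnn (div_nonneg ?_ (by positivity))) (pow_nonneg hνpos.le _)
    refine Finset.prod_nonneg fun j _ => ?_
    have hj : (0:ℝ) ≤ (j:ℝ) := Nat.cast_nonneg j
    linarith
  have hu_step : ∀ k : ℕ, ((k:ℝ) + 1) * u (k+1) = ν * (N + 1 + (k:ℝ)) * u k := by
    intro k
    have hfac : ((k.factorial : ℝ)) ≠ 0 := Nat.cast_ne_zero.mpr (Nat.factorial_ne_zero k)
    simp only [hu]
    rw [Finset.prod_range_succ, Nat.factorial_succ]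
    push_cast
    field_simp
    ring
  have hid := gaux_main a b c z0 h0 h1 f hrec
  have hcc : ν * (‖c‖ + ‖c - a - b - 1‖) ≤ M1 := by
    have h1' : ‖c - a - b - 1‖ ≤ ‖a + b + 1‖ + ‖c‖ := by
      have he : c - a - b - 1 = -((a + b + 1) - c) := by ring
      rw [he, norm_neg, sub_eq_add_neg]
      refine (norm_add_le _ _).trans ?_
      rw [norm_neg]
    nlinarith [hνpos.le, hM1]
  -- the main simultaneous induction
  have key : ∀ k : ℕ, ‖f k‖ ≤ u k ∧ ‖f (k+1)‖ ≤ u (k+1) ∧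
      ‖gaux z0 (-c) (a*b) f k‖
        + ‖gaux (z0-1) (c-a-b-1) (-(a*b)) f k‖
        ≤ ((k:ℝ) + 1) * ((k:ℝ) + 2) * u (k+2) := by
    intro k
    induction k with
    | zero =>
      have hu0 : u 0 = A := by simp [hu]
      have hu1 : u 1 = A * (ν * (N + 1)) := by
        simp [hu, Finset.prod_range_one]; ring
      have hf0 : ‖f 0‖ ≤ u 0 := by
        rw [hu0]; exact le_trans (le_max_left _ _) hA
      have hf1 : ‖f 1‖ ≤ u 1 := by
        rw [hu1]
        have hd : ‖f 1‖ / (ν * (N + 1)) ≤ A := le_trans (le_max_right _ _) hA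
        have hpos : (0:ℝ) < ν * (N + 1) := by positivity
        calc ‖f 1‖ = ‖f 1‖ / (ν * (N+1)) * (ν * (N+1)) := by
              field_simp
          _ ≤ A * (ν * (N + 1)) := by
              exact mul_le_mul_of_nonneg_right hd hpos.le
      refine ⟨hf0, hf1, ?_⟩
      -- bound on |g0 0| + |g1 0|
      have b0 := gaux_abs_zero h0 hν2 (-c) (a*b) f
      have b1 := gaux_abs_zero hz1 hν1 (c-a-b-1) (-(a*b)) f
      rw [norm_neg] at b0
      rw [norm_neg] at b1
      -- scalar work
      have e20 : u 1 = ν * (N + 1) * u 0 := by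
        have h := hu_step 0; push_cast at h; linarith
      have e21 : 2 * u 2 = ν * (N + 2) * u 1 := by
        have h := hu_step 1; push_cast at h; linarith
      have p1 : 0 ≤ (ν * N - 2 * M1) * (ν * (N + 1) * u 0) :=
        mul_nonneg (by linarith) (mul_nonneg (mul_nonneg hνpos.le (by linarith)) (hu_nonneg 0))
      have p2 : 0 ≤ ((ν * N) ^ 2 - 2 * M0) * u 0 := mul_nonneg (by linarith) (hu_nonneg 0)
      have q1 : 0 ≤ ν^2 * u 0 * N := mul_nonneg (mul_nonneg (sq_nonneg ν) (hu_nonneg 0)) hNnn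
      have q4 : 0 ≤ ν^2 * u 0 := mul_nonneg (sq_nonneg ν) (hu_nonneg 0)
      have hfinb : M1 * (ν * (N + 1) * u 0) + M0 * u 0 ≤ ν * (N + 2) * (ν * (N + 1) * u 0) := by
        linarith [p1, p2, q1, q4]
      have hb1 : M1 * u 1 = M1 * (ν * (N + 1) * u 0) := by rw [e20]
      have hb2 : ν * (N + 2) * u 1 = ν * (N + 2) * (ν * (N + 1) * u 0) := by rw [e20]
      have hscal : M1 * u 1 + M0 * u 0 ≤ 2 * u 2 := by linarith
      -- combine
      have r1 : (ν * (‖c‖ + ‖c - a - b - 1‖)) * ‖f 1‖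
          ≤ M1 * u 1 := by
        refine mul_le_mul hcc hf1 (norm_nonneg _) hM1nn
      have r2 : (2 * ν * ‖a * b‖) * ‖f 0‖ ≤ M0 * u 0 := by
        refine mul_le_mul hM0 hf0 (norm_nonneg _) hM0nn
      push_cast
      linarith [b0, b1, r1, r2, hscal]
    | succ n ihn =>
      obtain ⟨ihf0, ihf1, ihw⟩ := ihn
      -- |f (n+2)| ≤ u (n+2)
      have c1 : ‖(n:ℂ) + 1‖ = (n:ℝ) + 1 := by
        rw [show ((n:ℂ) + 1) = ((n+1 : ℕ) : ℂ) by push_cast; ring, Complex.norm_natCast]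
        push_cast; ring
      have c2 : ‖(n:ℂ) + 2‖ = (n:ℝ) + 2 := by
        rw [show ((n:ℂ) + 2) = ((n+2 : ℕ) : ℂ) by push_cast; ring, Complex.norm_natCast]
        push_cast; ring
      have habs2 : (((n:ℝ) + 1) * ((n:ℝ) + 2)) * ‖f (n+2)‖
          ≤ (((n:ℝ) + 1) * ((n:ℝ) + 2)) * u (n+2) := by
        have hh : (((n:ℝ) + 1) * ((n:ℝ) + 2)) * ‖f (n+2)‖
            = ‖((n:ℂ) + 1) * ((n:ℂ) + 2) * f (n+2)‖ := by
          rw [norm_mul, norm_mul, c1, c2]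
        rw [hh, hid n]
        calc ‖gaux z0 (-c) (a*b) f n + gaux (z0-1) (c-a-b-1) (-(a*b)) f n‖
            ≤ ‖gaux z0 (-c) (a*b) f n‖
              + ‖gaux (z0-1) (c-a-b-1) (-(a*b)) f n‖ := norm_add_le _ _
          _ ≤ ((n:ℝ) + 1) * ((n:ℝ) + 2) * u (n+2) := ihw
          _ = (((n:ℝ) + 1) * ((n:ℝ) + 2)) * u (n+2) := by ring
      have hf2 : ‖f (n+2)‖ ≤ u (n+2) :=
        le_of_mul_le_mul_left habs2 (by positivity)
      refine ⟨ihf1, hf2, ?_⟩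
      -- bound on |g0 (n+1)| + |g1 (n+1)|
      have b0 := gaux_abs_succ h0 hν2 (-c) (a*b) f n
      have b1 := gaux_abs_succ hz1 hν1 (c-a-b-1) (-(a*b)) f n
      rw [norm_neg] at b0
      rw [norm_neg] at b1
      -- u relations
      have e2 : ((n:ℝ) + 2) * u (n+2) = ν * (N + 2 + (n:ℝ)) * u (n+1) := by
        have h := hu_step (n+1); push_cast at h; linarith
      have e3 : ((n:ℝ) + 3) * u (n+3) = ν * (N + 3 + (n:ℝ)) * u (n+2) := by
        have h := hu_step (n+2); push_cast at h; linarith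
      have hn0 : (0:ℝ) ≤ (n:ℝ) := Nat.cast_nonneg n
      have p1 : 0 ≤ (ν * N - 2 * M1) * (ν * (N + 2 + (n:ℝ)) * u (n+1)) :=
        mul_nonneg (by linarith)
          (mul_nonneg (mul_nonneg hνpos.le (by linarith)) (hu_nonneg (n+1)))
      have p2 : 0 ≤ ((ν * N) ^ 2 - 2 * M0) * u (n+1) := mul_nonneg (by linarith) (hu_nonneg (n+1))
      have q1 : 0 ≤ ν^2 * u (n+1) * N :=
        mul_nonneg (mul_nonneg (sq_nonneg ν) (hu_nonneg (n+1))) hNnn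
      have q2 : 0 ≤ ν^2 * u (n+1) * (n:ℝ) :=
        mul_nonneg (mul_nonneg (sq_nonneg ν) (hu_nonneg (n+1))) hn0
      have q3 : 0 ≤ ν^2 * u (n+1) * N * (n:ℝ) := mul_nonneg q1 hn0
      have q4 : 0 ≤ ν^2 * u (n+1) := mul_nonneg (sq_nonneg ν) (hu_nonneg (n+1))
      have hfin : M1 * (ν * (N + 2 + (n:ℝ)) * u (n+1)) + M0 * u (n+1)
            + ν * (((n:ℝ) + 1) * (ν * (N + 2 + (n:ℝ)) * u (n+1)))
          ≤ ν * (N + 3 + (n:ℝ)) * (ν * (N + 2 + (n:ℝ)) * u (n+1)) := by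
        linarith [p1, p2, q1, q2, q3, q4]
      have hm1 : M1 * (((n:ℝ) + 2) * u (n+2)) = M1 * (ν * (N + 2 + (n:ℝ)) * u (n+1)) := by
        rw [e2]
      have hm2 : ν * (((n:ℝ) + 1) * (((n:ℝ) + 2) * u (n+2)))
          = ν * (((n:ℝ) + 1) * (ν * (N + 2 + (n:ℝ)) * u (n+1))) := by rw [e2]
      have hm3 : ((n:ℝ) + 2) * (((n:ℝ) + 3) * u (n+3))
          = ((n:ℝ) + 2) * (ν * (N + 3 + (n:ℝ)) * u (n+2)) := by rw [e3]
      have hm4 : ν * (N + 3 + (n:ℝ)) * (((n:ℝ) + 2) * u (n+2))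
          = ν * (N + 3 + (n:ℝ)) * (ν * (N + 2 + (n:ℝ)) * u (n+1)) := by rw [e2]
      have tfinal : M1 * (((n:ℝ) + 2) * u (n+2)) + M0 * u (n+1)
            + ν * (((n:ℝ) + 1) * (((n:ℝ) + 2) * u (n+2)))
          ≤ ((n:ℝ) + 2) * (((n:ℝ) + 3) * u (n+3)) := by
        linarith [hm1, hm2, hm3, hm4, hfin]
      -- the two product bounds
      have w1 : (ν * (‖c‖ + ‖c - a - b - 1‖))
            * (((n:ℝ) + 2) * ‖f (n+2)‖)
          ≤ M1 * (((n:ℝ) + 2) * u (n+2)) := by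
        refine mul_le_mul hcc ?_ (by positivity) hM1nn
        exact mul_le_mul_of_nonneg_left hf2 (by positivity)
      have w2 : (2 * ν * ‖a * b‖) * ‖f (n+1)‖ ≤ M0 * u (n+1) :=
        mul_le_mul hM0 ihf1 (norm_nonneg _) hM0nn
      have t3 : ν * (‖gaux z0 (-c) (a*b) f n‖
            + ‖gaux (z0-1) (c-a-b-1) (-(a*b)) f n‖)
          ≤ ν * (((n:ℝ) + 1) * ((n:ℝ) + 2) * u (n+2)) :=
        mul_le_mul_of_nonneg_left ihw hνpos.le
      push_cast
      linarith [b0, b1, w1, w2, t3, tfinal]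
  intro k
  have h := (key k).1
  simp only [hu] at h
  exact h
end

section
/- Let a, b, c, z_0 ∈ ℂ with z_0 ≠ 0 and z_0 ≠ 1, and let ν, M_0, M_1 be real numbers with ν ≥ max(1/|z_0 − 1|, 1/|z_0|), M_0 ≥ 2 ν |ab|, and M_1 ≥ ν (|a + b + 1| + 2|c|). Let P_2(z) = (z + z_0)(z + z_0 − 1), P_1(z) = (a + b + 1)(z + z_0) − c, P_0(z) = ab. Then the Taylor coefficients at z = 0 of the rational functions −P_0(z)/P_2(z) and −P_1(z)/P_2(z) satisfy, for every k ∈ ℕ: |(−P_0/P_2)_{[k]}| ≤ M_0 ν^k and |(−P_1/P_2)_{[k]}| ≤ M_1 ν^k. -/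
open PowerSeries

lemma abs_sub_le'' (x y : ℂ) : ‖x - y‖ ≤ ‖x‖ + ‖y‖ := by
  rw [sub_eq_add_neg]
  exact (norm_add_le _ _).trans (by rw [norm_neg])

lemma geom_inv (w : ℂ) (hw : w ≠ 0) :
    (PowerSeries.X + PowerSeries.C w)⁻¹
      = PowerSeries.mk fun k => (-1 : ℂ)^k * w⁻¹^(k+1) := by
  rw [PowerSeries.inv_eq_iff_mul_eq_one (by simp [hw])]
  ext n
  rw [mul_add, map_add, PowerSeries.coeff_mul_C]
  cases n with
  | zero => simp [PowerSeries.coeff_zero_mul_X, inv_mul_cancel₀ hw]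
  | succ n =>
    rw [PowerSeries.coeff_succ_mul_X]
    simp only [PowerSeries.coeff_mk, PowerSeries.coeff_one, Nat.succ_ne_zero, if_false]
    field_simp
    have hw1 : w * (1 / w) = 1 := by field_simp
    linear_combination ((-1 : ℂ) ^ (n + 1) * (1 / w) ^ (n + 1)) * hw1

/-- Coefficient bounds for the Taylor expansions at `z = 0` of
`−P₀(z)/P₂(z)` and `−P₁(z)/P₂(z)`, where
`P₂(z) = (z + z₀)(z + z₀ − 1)`, `P₁(z) = (a+b+1)(z+z₀) − c`, `P₀(z) = ab`,
interpreted as formal power series in `ℂ[[z]]` (with the field inverse of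
`P₂`, which exists since `P₂(0) = z₀(z₀−1) ≠ 0`). -/
theorem P_over_P2_coeff_bounds (a b c z0 : ℂ) (h0 : z0 ≠ 0) (h1 : z0 ≠ 1)
    (ν M0 M1 : ℝ)
    (hν : ν ≥ max (1 / ‖z0 - 1‖) (1 / ‖z0‖))
    (hM0 : M0 ≥ 2 * ν * ‖a * b‖)
    (hM1 : M1 ≥ ν * (‖a + b + 1‖ + 2 * ‖c‖))
    (P2 P1 P0 : PowerSeries ℂ)
    (hP2 : P2 = (PowerSeries.X + PowerSeries.C z0)
        * (PowerSeries.X + PowerSeries.C z0 - 1))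
    (hP1 : P1 = PowerSeries.C (a + b + 1) * (PowerSeries.X + PowerSeries.C z0)
        - PowerSeries.C c)
    (hP0 : P0 = PowerSeries.C (a * b)) :
    ∀ k : ℕ,
      ‖PowerSeries.coeff k (-P0 * P2⁻¹)‖ ≤ M0 * ν ^ k ∧
      ‖PowerSeries.coeff k (-P1 * P2⁻¹)‖ ≤ M1 * ν ^ k := by
  have hz1 : z0 - 1 ≠ 0 := sub_ne_zero.mpr h1
  set A : PowerSeries ℂ := PowerSeries.X + PowerSeries.C (z0 - 1) with hA
  set B : PowerSeries ℂ := PowerSeries.X + PowerSeries.C z0 with hB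
  have hAc : PowerSeries.constantCoeff A ≠ 0 := by simp [hA, hz1]
  have hBc : PowerSeries.constantCoeff B ≠ 0 := by simp [hB, h0]
  have hAB : A = B - 1 := by rw [hA, hB, map_sub, map_one]; ring
  have hP2' : P2 = B * A := by rw [hP2, hAB]
  have hP2c : PowerSeries.constantCoeff P2 ≠ 0 := by
    rw [hP2', map_mul]; exact mul_ne_zero hBc hAc
  have hAinv : A⁻¹ * A = 1 := PowerSeries.inv_mul_cancel A hAc
  have hBinv : B⁻¹ * B = 1 := PowerSeries.inv_mul_cancel B hBc
  have hfrac : P2⁻¹ = A⁻¹ - B⁻¹ := by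
    rw [PowerSeries.inv_eq_iff_mul_eq_one hP2c, hP2']
    calc (A⁻¹ - B⁻¹) * (B * A) = (A⁻¹ * A) * B - (B⁻¹ * B) * A := by ring
    _ = B - A := by rw [hAinv, hBinv]; ring
    _ = 1 := by rw [hAB]; ring
  have hAg := geom_inv (z0 - 1) hz1
  have hBg := geom_inv z0 h0
  have hP1frac : -P1 * P2⁻¹
      = PowerSeries.C (c - (a + b + 1)) * A⁻¹ - PowerSeries.C c * B⁻¹ := by
    have hP2ne : P2 ≠ 0 := fun h => hP2c (by simp [h])
    apply mul_right_cancel₀ hP2ne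
    have h' : -P1 * P2⁻¹ * P2 = -P1 := by
      rw [mul_assoc, PowerSeries.inv_mul_cancel P2 hP2c, mul_one]
    rw [h', hP1, hP2']; symm
    calc (PowerSeries.C (c - (a+b+1)) * A⁻¹ - PowerSeries.C c * B⁻¹) * (B * A)
        = PowerSeries.C (c - (a+b+1)) * (A⁻¹ * A) * B
          - PowerSeries.C c * (B⁻¹ * B) * A := by ring
    _ = PowerSeries.C (c - (a+b+1)) * B - PowerSeries.C c * A := by
        rw [hAinv, hBinv]; ring
    _ = _ := by rw [hAB]; simp only [map_sub, map_add, map_one]; ring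
  have hνA : 1 / ‖z0 - 1‖ ≤ ν := le_trans (le_max_left _ _) hν
  have hνB : 1 / ‖z0‖ ≤ ν := le_trans (le_max_right _ _) hν
  have habsA : (0:ℝ) < ‖z0 - 1‖ := norm_pos_iff.mpr hz1
  have habsB : (0:ℝ) < ‖z0‖ := norm_pos_iff.mpr h0
  have hν0 : 0 < ν := lt_of_lt_of_le (by positivity) hνB
  intro k
  have hcoefA : ‖PowerSeries.coeff k A⁻¹‖ ≤ ν ^ (k+1) := by
    rw [hAg, PowerSeries.coeff_mk, norm_mul, norm_pow, norm_pow, norm_inv,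
      norm_neg, norm_one, one_pow, one_mul]
    exact pow_le_pow_left₀ (by positivity) (by rw [one_div] at hνA; exact hνA) _
  have hcoefB : ‖PowerSeries.coeff k B⁻¹‖ ≤ ν ^ (k+1) := by
    rw [hBg, PowerSeries.coeff_mk, norm_mul, norm_pow, norm_pow, norm_inv,
      norm_neg, norm_one, one_pow, one_mul]
    exact pow_le_pow_left₀ (by positivity) (by rw [one_div] at hνB; exact hνB) _
  have hνk : (0:ℝ) ≤ ν ^ k := by positivity
  constructor
  · have h' : -P0 * P2⁻¹ = PowerSeries.C (-(a*b)) * (A⁻¹ - B⁻¹) := by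
      rw [hP0, hfrac, map_neg]
    rw [h', PowerSeries.coeff_C_mul, norm_mul, norm_neg]
    have h2 : ‖PowerSeries.coeff k (A⁻¹ - B⁻¹)‖ ≤ 2 * ν ^ (k+1) := by
      rw [map_sub]
      calc ‖_‖ ≤ ‖PowerSeries.coeff k A⁻¹‖
            + ‖PowerSeries.coeff k B⁻¹‖ := abs_sub_le'' _ _
        _ ≤ 2 * ν ^ (k+1) := by linarith
    calc ‖a*b‖ * ‖PowerSeries.coeff k (A⁻¹ - B⁻¹)‖
        ≤ ‖a*b‖ * (2 * ν ^ (k+1)) :=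
          mul_le_mul_of_nonneg_left h2 (norm_nonneg _)
      _ = (2 * ν * ‖a*b‖) * ν ^ k := by ring
      _ ≤ M0 * ν ^ k := mul_le_mul_of_nonneg_right hM0 hνk
  · rw [hP1frac, map_sub, PowerSeries.coeff_C_mul, PowerSeries.coeff_C_mul]
    have h3 : ‖c - (a+b+1)‖ ≤ ‖a+b+1‖ + ‖c‖ := by
      calc ‖c - (a+b+1)‖ ≤ ‖c‖ + ‖a+b+1‖ :=
        abs_sub_le'' _ _
      _ = _ := by ring
    have e1 : ‖c-(a+b+1)‖ * ‖PowerSeries.coeff k A⁻¹‖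
        ≤ (‖a+b+1‖ + ‖c‖) * ν ^ (k+1) :=
      mul_le_mul h3 hcoefA (norm_nonneg _)
        (by positivity)
    have e2 : ‖c‖ * ‖PowerSeries.coeff k B⁻¹‖
        ≤ ‖c‖ * ν ^ (k+1) :=
      mul_le_mul_of_nonneg_left hcoefB (norm_nonneg _)
    calc ‖_‖
        ≤ ‖(c - (a+b+1)) * PowerSeries.coeff k A⁻¹‖
          + ‖c * PowerSeries.coeff k B⁻¹‖ := abs_sub_le'' _ _
      _ ≤ (‖a+b+1‖ + ‖c‖) * ν ^ (k+1)
          + ‖c‖ * ν ^ (k+1) := by rw [norm_mul, norm_mul]; linarith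
      _ = (ν * (‖a+b+1‖ + 2 * ‖c‖)) * ν ^ k := by ring
      _ ≤ M1 * ν ^ k := mul_le_mul_of_nonneg_right hM1 hνk
end
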